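/- Let X be a random vector whose distribution satisfies the global Markov property with respect to an undirected graph G (i.e., for any connected component s of a set of vertices and its neighborhood N_G(s), X_s is conditionally independent of the remaining variables given X_{N_G(s)}). Suppose missingness is MCAR: R ⟂ X. Then for every response pattern r with missing components decomposing into connected components s_1,…,s_K of G, the MMG-PAI imputation model equals the true conditional distribution: ∏_{k=1}^K p(x_{s_k} | x_{N_G(s_k)}, R_{N̄_G(s_k)}=1) = p(x_{r̄} | x_r). -/

import Mathlib

open Finset
open scoped Classical

section MMG

variable {d : ℕ} {S : Type} [Fintype S]

/-- Graph neighborhood of a vertex set. -/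
def nbd (G : SimpleGraph (Fin d)) (s : Set (Fin d)) : Set (Fin d) :=
  {v | v ∉ s ∧ ∃ u ∈ s, G.Adj u v}

/-- Reachability within a set `M`. -/
def reachIn (G : SimpleGraph (Fin d)) (M : Set (Fin d)) (u v : Fin d) : Prop :=
  u ∈ M ∧ Relation.ReflTransGen (fun a b => b ∈ M ∧ G.Adj a b) u v

/-- Connected component of `M` containing `v`. -/
def compOf (G : SimpleGraph (Fin d)) (M : Set (Fin d)) (v : Fin d) : Set (Fin d) :=
  {u | reachIn G M v u}

/-- Connected components of `M` in `G`. -/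
def components (G : SimpleGraph (Fin d)) (M : Set (Fin d)) : Set (Set (Fin d)) :=
  {c | ∃ v ∈ M, c = compOf G M v}

def missingSet (r : Fin d → Bool) : Set (Fin d) := {j | r j = false}

def obsSet (r : Fin d → Bool) : Set (Fin d) := {j | r j = true}

/-- The event that all variables in `E` are observed. -/
def obsEv (E : Set (Fin d)) (r : Fin d → Bool) : Prop := ∀ j ∈ E, r j = true

/-- The density `p(x_A, R = r)`: marginalize all coordinates outside `A`. -/
noncomputable def margOn (p : (Fin d → S) → (Fin d → Bool) → ℝ)
    (A : Set (Fin d)) (x : Fin d → S) (r : Fin d → Bool) : ℝ :=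
  ∑ y : Fin d → S, if ∀ j ∈ A, y j = x j then p y r else 0

/-- The density `p(x_A, R_E = 1)`. -/
noncomputable def margObs (p : (Fin d → S) → (Fin d → Bool) → ℝ)
    (A E : Set (Fin d)) (x : Fin d → S) : ℝ :=
  ∑ r : Fin d → Bool, if obsEv E r then margOn p A x r else 0

/-- The conditional density `p(x_T | x_C, R = r)`. -/
noncomputable def condAt (p : (Fin d → S) → (Fin d → Bool) → ℝ)
    (T C : Set (Fin d)) (r : Fin d → Bool) (x : Fin d → S) : ℝ :=
  margOn p (T ∪ C) x r / margOn p C x r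

/-- The conditional density `p(x_T | x_C, R_E = 1)`. -/
noncomputable def condObs (p : (Fin d → S) → (Fin d → Bool) → ℝ)
    (T C E : Set (Fin d)) (x : Fin d → S) : ℝ :=
  margObs p (T ∪ C) E x / margObs p C E x

/-- PAI-identified submodel `p(x_T | x_{N_G(T)}, R_{N̄_G(T)} = 1)`. -/
noncomputable def condPAI (p : (Fin d → S) → (Fin d → Bool) → ℝ)
    (G : SimpleGraph (Fin d)) (T : Set (Fin d)) (x : Fin d → S) : ℝ :=
  condObs p T (nbd G T) (T ∪ nbd G T) x

/-- MMG imputation model: product of PAI submodels over connected components of missing set. -/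
noncomputable def mmgModel (p : (Fin d → S) → (Fin d → Bool) → ℝ)
    (G : SimpleGraph (Fin d)) (x : Fin d → S) (r : Fin d → Bool) : ℝ :=
  ∏ c ∈ (Set.toFinite (components G (missingSet r))).toFinset, condPAI p G c x

end MMG

/-- Marginal density of `X_A` for a full-data density `px`. -/
noncomputable def margX {d : ℕ} {S : Type} [Fintype S]
    (px : (Fin d → S) → ℝ) (A : Set (Fin d)) (x : Fin d → S) : ℝ :=
  ∑ y : Fin d → S, if ∀ j ∈ A, y j = x j then px y else 0

/-- Conditional density `p(x_T | x_C)` for the full-data density `px`. -/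
noncomputable def condX {d : ℕ} {S : Type} [Fintype S]
    (px : (Fin d → S) → ℝ) (T C : Set (Fin d)) (x : Fin d → S) : ℝ :=
  margX px (T ∪ C) x / margX px C x


section Aux
variable {d : ℕ} {S : Type} [Fintype S]

lemma margX_congr (px : (Fin d → S) → ℝ) {A : Set (Fin d)} {x y : Fin d → S}
    (h : ∀ j ∈ A, y j = x j) : margX px A y = margX px A x := by
  unfold margX
  refine Finset.sum_congr rfl fun z _ => ?_
  refine if_congr ?_ rfl rfl
  constructor
  · intro hz j hj; rw [hz j hj, h j hj]
  · intro hz j hj; rw [hz j hj, ← h j hj]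

lemma sum_margX (px : (Fin d → S) → ℝ) {B T : Set (Fin d)} (hTB : T ⊆ B) (x : Fin d → S) :
    (∑ y : Fin d → S, if ∀ j ∈ Tᶜ, y j = x j then margX px B y else 0)
      = margX px (B \ T) x := by
  have step1 : ∀ y : Fin d → S,
      (if (∀ j ∈ Tᶜ, y j = x j) then margX px B y else 0)
        = ∑ z : Fin d → S,
            if ((∀ j ∈ Tᶜ, y j = x j) ∧ ∀ j ∈ B, z j = y j) then px z else 0 := by
    intro y
    by_cases hp : ∀ j ∈ Tᶜ, y j = x j
    · rw [if_pos hp]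
      simp only [eq_true hp, true_and]
      rfl
    · rw [if_neg hp]
      simp only [eq_false hp, false_and, if_false, Finset.sum_const_zero]
  rw [Finset.sum_congr rfl fun y _ => step1 y, Finset.sum_comm]
  refine Finset.sum_congr rfl fun z _ => ?_
  set y₀ : Fin d → S := fun j => if j ∈ T then z j else x j with hy₀
  have hiff : ∀ y : Fin d → S,
      ((∀ j ∈ Tᶜ, y j = x j) ∧ ∀ j ∈ B, z j = y j)
        ↔ (y = y₀ ∧ ∀ j ∈ B \ T, z j = x j) := by
    intro y
    constructor
    · rintro ⟨h1, h2⟩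
      constructor
      · funext j
        by_cases hj : j ∈ T
        · rw [hy₀]; simp only [hj, if_true]; exact (h2 j (hTB hj)).symm
        · rw [hy₀]; simp only [hj, if_false]; exact h1 j hj
      · rintro j ⟨hjB, hjT⟩
        rw [h2 j hjB, h1 j hjT]
    · rintro ⟨rfl, hR⟩
      constructor
      · intro j hj; rw [hy₀]; exact if_neg hj
      · intro j hjB
        by_cases hj : j ∈ T
        · rw [hy₀]; simp only [hj, if_true]
        · rw [hy₀]; simp only [hj, if_false]; exact hR j ⟨hjB, hj⟩
  rw [Finset.sum_congr rfl fun y _ => if_congr (hiff y) rfl rfl]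
  by_cases hR : ∀ j ∈ B \ T, z j = x j
  · simp only [eq_true hR, and_true, if_true]
    rw [Finset.sum_ite_eq' Finset.univ y₀ (fun _ => px z)]
    simp
  · simp only [eq_false hR, and_false, if_false, Finset.sum_const_zero]


lemma weakenCI (px : (Fin d → S) → ℝ) {s N T : Set (Fin d)}
    (hTN : ∀ j ∈ T, j ∉ N) (hTs : T ⊆ sᶜ)
    (h : ∀ y, margX px Set.univ y * margX px N y = margX px (s ∪ N) y * margX px sᶜ y)
    (x : Fin d → S) :
    margX px N x * margX px (Set.univ \ T) x
      = margX px (s ∪ N) x * margX px (sᶜ \ T) x := by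
  have hNT : N ⊆ Tᶜ := fun j hj hjT => hTN j hjT hj
  have hsNT : s ∪ N ⊆ Tᶜ := by
    rintro j (hj | hj)
    · exact fun hjT => hTs hjT hj
    · exact hNT hj
  have calc1 : (∑ y : Fin d → S, if ∀ j ∈ Tᶜ, y j = x j
        then margX px Set.univ y * margX px N y else 0)
      = margX px N x * margX px (Set.univ \ T) x := by
    have : ∀ y : Fin d → S, (if ∀ j ∈ Tᶜ, y j = x j
          then margX px Set.univ y * margX px N y else 0)
        = (if ∀ j ∈ Tᶜ, y j = x j then margX px Set.univ y else 0) * margX px N x := by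
      intro y
      by_cases hp : ∀ j ∈ Tᶜ, y j = x j
      · rw [if_pos hp, if_pos hp,
          margX_congr px (fun j hj => hp j (hNT hj))]
      · rw [if_neg hp, if_neg hp, zero_mul]
    rw [Finset.sum_congr rfl fun y _ => this y, ← Finset.sum_mul,
      sum_margX px (Set.subset_univ T) x, mul_comm]
  have calc2 : (∑ y : Fin d → S, if ∀ j ∈ Tᶜ, y j = x j
        then margX px (s ∪ N) y * margX px sᶜ y else 0)
      = margX px (s ∪ N) x * margX px (sᶜ \ T) x := by
    have : ∀ y : Fin d → S, (if ∀ j ∈ Tᶜ, y j = x j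
          then margX px (s ∪ N) y * margX px sᶜ y else 0)
        = (if ∀ j ∈ Tᶜ, y j = x j then margX px sᶜ y else 0) * margX px (s ∪ N) x := by
      intro y
      by_cases hp : ∀ j ∈ Tᶜ, y j = x j
      · rw [if_pos hp, if_pos hp,
          margX_congr px (fun j hj => hp j (hsNT hj)), mul_comm]
      · rw [if_neg hp, if_neg hp, zero_mul]
    rw [Finset.sum_congr rfl fun y _ => this y, ← Finset.sum_mul,
      sum_margX px hTs x, mul_comm]
  rw [← calc1, ← calc2]
  exact Finset.sum_congr rfl fun y _ => by rw [h y]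

/-! Graph component lemmas -/

lemma reach_mem {G : SimpleGraph (Fin d)} {M : Set (Fin d)} {v u : Fin d} (hv : v ∈ M)
    (h : Relation.ReflTransGen (fun a b => b ∈ M ∧ G.Adj a b) v u) : u ∈ M := by
  induction h with
  | refl => exact hv
  | tail _ h _ => exact h.1

lemma reach_symm {G : SimpleGraph (Fin d)} {M : Set (Fin d)} {v u : Fin d} (hv : v ∈ M)
    (h : Relation.ReflTransGen (fun a b => b ∈ M ∧ G.Adj a b) v u) :
    Relation.ReflTransGen (fun a b => b ∈ M ∧ G.Adj a b) u v := by
  induction h with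
  | refl => exact .refl
  | tail hab h ih =>
    exact Relation.ReflTransGen.head ⟨reach_mem hv hab, h.2.symm⟩ ih

lemma mem_compOf_self {G : SimpleGraph (Fin d)} {M : Set (Fin d)} {v : Fin d} (hv : v ∈ M) :
    v ∈ compOf G M v := ⟨hv, .refl⟩

lemma compOf_subset {G : SimpleGraph (Fin d)} {M : Set (Fin d)} {v : Fin d} :
    compOf G M v ⊆ M := fun u hu => reach_mem hu.1 hu.2

lemma compOf_eq_of_mem {G : SimpleGraph (Fin d)} {M : Set (Fin d)} {v u : Fin d}
    (hu : u ∈ compOf G M v) : compOf G M u = compOf G M v := by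
  obtain ⟨hv, hvu⟩ := hu
  have hu' : u ∈ M := reach_mem hv hvu
  ext w
  constructor
  · rintro ⟨_, huw⟩; exact ⟨hv, hvu.trans huw⟩
  · rintro ⟨_, hvw⟩; exact ⟨hu', (reach_symm hv hvu).trans hvw⟩

lemma components_subset {G : SimpleGraph (Fin d)} {M c : Set (Fin d)}
    (hc : c ∈ components G M) : c ⊆ M := by
  obtain ⟨v, hv, rfl⟩ := hc; exact compOf_subset

lemma nbd_disj {G : SimpleGraph (Fin d)} {M c : Set (Fin d)}
    (hc : c ∈ components G M) : ∀ j ∈ nbd G c, j ∉ M := by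
  rintro j ⟨hjc, u, hu, hadj⟩ hjM
  obtain ⟨v, hv, rfl⟩ := hc
  exact hjc ⟨hu.1, hu.2.tail ⟨hjM, hadj⟩⟩

lemma path_avoid {G : SimpleGraph (Fin d)} {M : Set (Fin d)} {v v0 u : Fin d} (hv : v ∈ M)
    (hvc : v ∉ compOf G M v0)
    (h : Relation.ReflTransGen (fun a b => b ∈ M ∧ G.Adj a b) v u) :
    u ∉ compOf G M v0 ∧
      Relation.ReflTransGen (fun a b => b ∈ M \ compOf G M v0 ∧ G.Adj a b) v u := by
  induction h with
  | refl => exact ⟨hvc, .refl⟩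
  | @tail b w hab hbw ih =>
    have hwnot : w ∉ compOf G M v0 := by
      intro hw
      have h1 : w ∈ compOf G M v := ⟨hv, hab.tail hbw⟩
      have h2 := compOf_eq_of_mem h1
      have h3 := compOf_eq_of_mem hw
      exact hvc (h3 ▸ h2 ▸ mem_compOf_self hv)
    exact ⟨hwnot, ih.2.tail ⟨⟨hbw.1, hwnot⟩, hbw.2⟩⟩

lemma compOf_sdiff {G : SimpleGraph (Fin d)} {M c : Set (Fin d)} {v : Fin d}
    (hc : c ∈ components G M) (hv : v ∈ M) (hvc : v ∉ c) :
    compOf G (M \ c) v = compOf G M v := by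
  obtain ⟨v0, hv0, rfl⟩ := hc
  ext u
  constructor
  · rintro ⟨hv', h⟩
    exact ⟨hv, Relation.ReflTransGen.mono (r := fun a b => b ∈ M \ compOf G M v0 ∧ G.Adj a b)
      (p := fun a b => b ∈ M ∧ G.Adj a b) (by intro a b hb; exact ⟨hb.1.1, hb.2⟩) v u h⟩
  · rintro ⟨_, h⟩
    exact ⟨⟨hv, hvc⟩, (path_avoid hv hvc h).2⟩

lemma components_sdiff {G : SimpleGraph (Fin d)} {M c : Set (Fin d)}
    (hc : c ∈ components G M) :
    components G (M \ c) = components G M \ {c} := by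
  ext c'
  constructor
  · rintro ⟨v, hv, rfl⟩
    rw [compOf_sdiff hc hv.1 hv.2]
    refine ⟨⟨v, hv.1, rfl⟩, ?_⟩
    intro heq
    rw [Set.mem_singleton_iff] at heq
    exact hv.2 (heq ▸ mem_compOf_self hv.1)
  · rintro ⟨⟨v, hv, rfl⟩, hne⟩
    rw [Set.mem_singleton_iff] at hne
    have hvc : v ∉ c := by
      intro hvIn
      obtain ⟨v0, hv0, rfl⟩ := hc
      exact hne (compOf_eq_of_mem hvIn)
    exact ⟨v, ⟨hv, hvc⟩, (compOf_sdiff hc hv hvc).symm⟩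

/-! MCAR reduction -/

lemma margOn_eq (p : (Fin d → S) → (Fin d → Bool) → ℝ) (px : (Fin d → S) → ℝ)
    (pr : (Fin d → Bool) → ℝ) (hMCAR : ∀ x r, p x r = px x * pr r)
    (A : Set (Fin d)) (x : Fin d → S) (r : Fin d → Bool) :
    margOn p A x r = margX px A x * pr r := by
  unfold margOn margX
  rw [Finset.sum_mul]
  refine Finset.sum_congr rfl fun y _ => ?_
  rw [hMCAR]
  split_ifs <;> simp

lemma margObs_eq (p : (Fin d → S) → (Fin d → Bool) → ℝ) (px : (Fin d → S) → ℝ)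
    (pr : (Fin d → Bool) → ℝ) (hMCAR : ∀ x r, p x r = px x * pr r)
    (A E : Set (Fin d)) (x : Fin d → S) :
    margObs p A E x
      = margX px A x * ∑ r : Fin d → Bool, if obsEv E r then pr r else 0 := by
  unfold margObs
  rw [Finset.mul_sum]
  refine Finset.sum_congr rfl fun r _ => ?_
  rw [margOn_eq p px pr hMCAR]
  split_ifs <;> simp

lemma condPAI_eq (p : (Fin d → S) → (Fin d → Bool) → ℝ) (px : (Fin d → S) → ℝ)
    (pr : (Fin d → Bool) → ℝ) (hMCAR : ∀ x r, p x r = px x * pr r)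
    (hposR : ∀ E : Set (Fin d),
      (∑ r : Fin d → Bool, if obsEv E r then pr r else 0) ≠ 0)
    (G : SimpleGraph (Fin d)) (c : Set (Fin d)) (x : Fin d → S) :
    condPAI p G c x = condX px c (nbd G c) x := by
  unfold condPAI condObs condX
  rw [margObs_eq p px pr hMCAR, margObs_eq p px pr hMCAR,
    mul_div_mul_right _ _ (hposR _)]

/-! Main product lemma -/

lemma main_prod {G : SimpleGraph (Fin d)} {px : (Fin d → S) → ℝ}
    (hMarkov : ∀ (M : Set (Fin d)), ∀ s ∈ components G M, ∀ x,
      condX px s (sᶜ) x = condX px s (nbd G s) x)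
    (hposX : ∀ (A : Set (Fin d)) x, margX px A x ≠ 0) :
    ∀ (n : ℕ) (M : Set (Fin d)),
      (Set.toFinite (components G M)).toFinset.card = n →
      ∀ x, (∏ c ∈ (Set.toFinite (components G M)).toFinset, condX px c (nbd G c) x)
        = margX px Set.univ x / margX px Mᶜ x := by
  intro n
  induction n with
  | zero =>
    intro M hM x
    have hMe : M = ∅ := by
      by_contra h
      obtain ⟨v, hv⟩ := Set.nonempty_iff_ne_empty.mpr h
      have hmem : compOf G M v ∈ (Set.toFinite (components G M)).toFinset := by
        rw [Set.Finite.mem_toFinset]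
        exact ⟨v, hv, rfl⟩
      have := Finset.card_pos.mpr ⟨_, hmem⟩
      omega
    have hempty : (Set.toFinite (components G M)).toFinset = ∅ :=
      Finset.card_eq_zero.mp hM
    rw [hempty, Finset.prod_empty, hMe, Set.compl_empty, div_self (hposX _ _)]
  | succ n ih =>
    intro M hM x
    have hne : (Set.toFinite (components G M)).toFinset.Nonempty :=
      Finset.card_pos.mp (by omega)
    obtain ⟨c, hcF⟩ := hne
    have hc : c ∈ components G M := (Set.Finite.mem_toFinset _).mp hcF
    have hsub : c ⊆ M := components_subset hc
    have hfe : (Set.toFinite (components G (M \ c))).toFinset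
        = (Set.toFinite (components G M)).toFinset.erase c := by
      ext c'
      rw [Set.Finite.mem_toFinset, components_sdiff hc, Finset.mem_erase,
        Set.Finite.mem_toFinset]
      exact ⟨fun ⟨h1, h2⟩ => ⟨h2, h1⟩, fun ⟨h1, h2⟩ => ⟨h2, h1⟩⟩
    have hcard : (Set.toFinite (components G (M \ c))).toFinset.card = n := by
      rw [hfe, Finset.card_erase_of_mem hcF, hM]
      omega
    rw [← Finset.prod_erase_mul _ _ hcF, ← hfe, ih (M \ c) hcard x]
    -- Markov in product form
    set N := nbd G c with hN
    have hMk : ∀ y, margX px Set.univ y * margX px N y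
        = margX px (c ∪ N) y * margX px cᶜ y := by
      intro y
      have h1 := hMarkov M c hc y
      unfold condX at h1
      rw [Set.union_compl_self] at h1
      rw [div_eq_div_iff (hposX _ _) (hposX _ _)] at h1
      linarith [h1]
    have hTN : ∀ j ∈ M \ c, j ∉ N := fun j hj hjN => nbd_disj hc j hjN hj.1
    have hTs : M \ c ⊆ cᶜ := fun j hj => hj.2
    have hstar := weakenCI px hTN hTs hMk x
    have hset1 : Set.univ \ (M \ c) = (M \ c)ᶜ := by
      rw [Set.compl_eq_univ_diff]
    have hset2 : cᶜ \ (M \ c) = Mᶜ := by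
      ext j
      simp only [Set.mem_diff, Set.mem_compl_iff, not_and, not_not]
      constructor
      · rintro ⟨hjc, h2⟩ hjM; exact hjc (h2 hjM)
      · intro hjM
        exact ⟨fun hjc => hjM (hsub hjc), fun hjM' => absurd hjM' hjM⟩
    rw [hset1, hset2] at hstar
    unfold condX
    have h1 := hposX N x
    have h2 := hposX (M \ c)ᶜ x
    have h3 := hposX Mᶜ x
    field_simp
    linear_combination (- margX px Set.univ x) * hstar

end Aux

/-- recovery under MCAR and the global Markov property.
If `X` satisfies the global Markov property w.r.t. `G` (each connected component of any
vertex set is conditionally independent of the rest given its neighborhood) and `R ⟂ X`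
(MCAR), then the MMG-PAI imputation model equals the true conditional distribution:
`∏_k p(x_{s_k} | x_{N_G(s_k)}, R_{N̄_G(s_k)}=1) = p(x_{r̄} | x_r)`. -/
theorem stmt4 {d : ℕ} {S : Type} [Fintype S] (G : SimpleGraph (Fin d))
    (p : (Fin d → S) → (Fin d → Bool) → ℝ)
    (px : (Fin d → S) → ℝ) (pr : (Fin d → Bool) → ℝ)
    (hMCAR : ∀ x r, p x r = px x * pr r)
    (hMarkov : ∀ (M : Set (Fin d)), ∀ s ∈ components G M, ∀ x,
      condX px s (sᶜ) x = condX px s (nbd G s) x)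
    (hposX : ∀ (A : Set (Fin d)) x, margX px A x ≠ 0)
    (hposR : ∀ E : Set (Fin d),
      (∑ r : Fin d → Bool, if obsEv E r then pr r else 0) ≠ 0) :
    ∀ (r : Fin d → Bool) x,
      (∏ c ∈ (Set.toFinite (components G (missingSet r))).toFinset, condPAI p G c x)
        = condX px (missingSet r) (obsSet r) x := by
  intro r x
  have hM : obsSet r = (missingSet r)ᶜ := by
    ext j
    simp only [obsSet, missingSet, Set.mem_compl_iff, Set.mem_setOf_eq,
      Bool.not_eq_false]
  rw [Finset.prod_congr rfl fun c _ => condPAI_eq p px pr hMCAR hposR G c x,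
    main_prod hMarkov hposX _ (missingSet r) rfl x, hM]
  unfold condX
  rw [Set.union_compl_self]
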